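/- Let n ≥ 1 and let g assign a complex number to every nonempty list of distinct elements of {1,…,n}, invariant under cyclic rotation of the list. For a permutation τ of a nonempty subset A ⊆ {1,…,n}, define F(τ) := ∏_{γ orbit of τ} g(m, τ(m), τ²(m), …, τ^{|γ|−1}(m)) where m is any element of the orbit γ (well-defined by the cyclic invariance of g; fixed points count as orbits of size 1). Then for every μ ∈ ℂ: Σ_{σ} μ^{|σ|} · ∏_{A∈σ} ( Σ_{τ ∈ Sym(A)} F(τ) ) = Σ_{π∈S_n} T_{c(π)}(μ) · F(π), where σ runs over all set partitions of {1,…,n}, Sym(A) is the group of permutations of the block A, S_n is the symmetric group on {1,…,n}, and c(π) is the number of orbits of π. -/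

import Mathlib

open scoped BigOperators

namespace Stmt8
noncomputable section

/-- A set partition of `Fin n`: a finset of pairwise disjoint nonempty blocks whose union is
everything. -/
def IsSetPartition {n : ℕ} (σ : Finset (Finset (Fin n))) : Prop :=
  ∅ ∉ σ ∧ (∀ A ∈ σ, ∀ B ∈ σ, A ≠ B → Disjoint A B) ∧ σ.sup id = Finset.univ

instance {n : ℕ} (σ : Finset (Finset (Fin n))) : Decidable (IsSetPartition σ) :=
  inferInstanceAs (Decidable (∅ ∉ σ ∧ (∀ A ∈ σ, ∀ B ∈ σ, A ≠ B → Disjoint A B) ∧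
    σ.sup id = Finset.univ))

/-- Touchard (Bell) polynomial `T_m(x) = Σ_η x^{|η|}`, the sum over all set partitions of an
`m`-element set (`T_0 = 1`). -/
def touchard (m : ℕ) (x : ℂ) : ℂ :=
  ∑ η ∈ Finset.univ.filter (IsSetPartition (n := m)), x ^ η.card

/-- The orbit of `m` under the permutation `π`. -/
def permOrbit {p : ℕ} (π : Equiv.Perm (Fin p)) (m : Fin p) : Finset (Fin p) :=
  Finset.univ.filter (fun y => ∃ t ∈ Finset.range p, (π ^ t) m = y)

/-- Number of orbits of a permutation (fixed points counted as orbits). -/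
def numOrbits {p : ℕ} (π : Equiv.Perm (Fin p)) : ℕ :=
  (Finset.univ.image (permOrbit π)).card

/-- The list `[m, π m, π² m, …, π^{|orbit|−1} m]` traversing the orbit of `m` under `π`. -/
def cycleList {n : ℕ} (π : Equiv.Perm (Fin n)) (m : Fin n) : List (Fin n) :=
  (List.range (permOrbit π m).card).map (fun t => (π ^ t) m)

/-- The multiplicative function `F(τ) = Π_{γ orbit of τ, γ ⊆ A} g(m, τ m, τ² m, …)`
associated to `g`, over the ground set `A`: the product over the orbits of `τ` lying in `A`
of `g` evaluated on the cycle list starting at the minimal element of the orbit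
(by cyclic invariance of `g` the choice of starting point is immaterial). -/
def cycleFun {n : ℕ} (g : List (Fin n) → ℂ) (A : Finset (Fin n))
    (τ : Equiv.Perm (Fin n)) : ℂ :=
  ∏ m ∈ A.filter (fun m => ∀ y ∈ permOrbit τ m, m ≤ y), g (cycleList τ m)

variable {n : ℕ}

lemma pow_mem_permOrbit (hn : 1 ≤ n) (π : Equiv.Perm (Fin n)) (x : Fin n) (k : ℕ) :
    (π ^ k) x ∈ permOrbit π x := by
  induction k using Nat.strong_induction_on with
  | _ k ih =>
    by_cases hk : k < n
    · simp only [permOrbit, Finset.mem_filter, Finset.mem_univ, true_and]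
      exact ⟨k, Finset.mem_range.mpr hk, rfl⟩
    · push_neg at hk
      -- pigeonhole: exists a < b ≤ n with π^a x = π^b x
      obtain ⟨a, ha, b, hb, hab, heq⟩ :=
        Finset.exists_ne_map_eq_of_card_lt_of_maps_to
          (s := Finset.range (n+1)) (t := (Finset.univ : Finset (Fin n)))
          (by simp) (fun i _ => Finset.mem_univ ((π ^ i) x))
      rw [Finset.mem_range] at ha hb
      -- wlog a < b
      rcases lt_or_gt_of_ne hab with hlt | hlt
      · have key : (π ^ k) x = (π ^ (k - b + a)) x := by
          have h1 : k - b + b = k := Nat.sub_add_cancel (le_trans (Nat.lt_succ_iff.mp hb) hk)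
          calc (π ^ k) x = (π ^ (k - b) * π ^ b) x := by rw [← pow_add, h1]
            _ = (π ^ (k - b)) ((π ^ b) x) := rfl
            _ = (π ^ (k - b)) ((π ^ a) x) := by rw [heq]
            _ = (π ^ (k - b + a)) x := by rw [pow_add]; rfl
        rw [key]
        exact ih _ (by omega)
      · have key : (π ^ k) x = (π ^ (k - a + b)) x := by
          have h1 : k - a + a = k := Nat.sub_add_cancel (by omega)
          calc (π ^ k) x = (π ^ (k - a) * π ^ a) x := by rw [← pow_add, h1]
            _ = (π ^ (k - a)) ((π ^ a) x) := rfl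
            _ = (π ^ (k - a)) ((π ^ b) x) := by rw [heq]
            _ = (π ^ (k - a + b)) x := by rw [pow_add]; rfl
        rw [key]
        exact ih _ (by omega)

lemma mem_permOrbit_iff (hn : 1 ≤ n) {π : Equiv.Perm (Fin n)} {x y : Fin n} :
    y ∈ permOrbit π x ↔ π.SameCycle x y := by
  constructor
  · intro h
    simp only [permOrbit, Finset.mem_filter, Finset.mem_univ, true_and] at h
    obtain ⟨t, _, ht⟩ := h
    exact ⟨(t : ℤ), by rw [zpow_natCast]; exact ht⟩
  · intro h
    obtain ⟨i, hi, hix⟩ := h.exists_pow_eq'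
    rw [← hix]
    exact pow_mem_permOrbit hn π x i

lemma mem_permOrbit_self (hn : 1 ≤ n) (π : Equiv.Perm (Fin n)) (x : Fin n) :
    x ∈ permOrbit π x :=
  (mem_permOrbit_iff hn).mpr (Equiv.Perm.SameCycle.refl π x)

lemma apply_mem_permOrbit (hn : 1 ≤ n) (π : Equiv.Perm (Fin n)) (x : Fin n) :
    π x ∈ permOrbit π x := by
  have := pow_mem_permOrbit hn π x 1
  rwa [pow_one] at this

lemma permOrbit_eq_of_mem (hn : 1 ≤ n) {π : Equiv.Perm (Fin n)} {x y : Fin n}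
    (h : y ∈ permOrbit π x) : permOrbit π y = permOrbit π x := by
  rw [mem_permOrbit_iff hn] at h
  ext z
  rw [mem_permOrbit_iff hn, mem_permOrbit_iff hn]
  exact ⟨h.trans, h.symm.trans⟩

lemma maps_to_of_fix {A : Finset (Fin n)} {τ : Equiv.Perm (Fin n)}
    (hτ : ∀ x ∉ A, τ x = x) {x : Fin n} (hx : x ∈ A) : τ x ∈ A := by
  by_contra h
  have h2 : τ (τ x) = τ x := hτ _ h
  have h3 : τ x = x := τ.injective h2
  exact h (by rw [h3]; exact hx)

lemma pow_mul_eq_left {A B : Finset (Fin n)} (hd : Disjoint A B)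
    {τ π : Equiv.Perm (Fin n)} (hτ : ∀ x ∉ A, τ x = x) (hπ : ∀ x ∉ B, π x = x)
    (t : ℕ) {m : Fin n} (hm : m ∈ A) : ((τ * π) ^ t) m = (τ ^ t) m := by
  induction t generalizing m with
  | zero => rfl
  | succ t ih =>
    have hmB : m ∉ B := fun h => (Finset.disjoint_left.mp hd hm) h
    have h1 : (τ * π) m = τ m := by
      change τ (π m) = τ m
      rw [hπ m hmB]
    calc ((τ * π) ^ (t+1)) m = ((τ * π) ^ t) ((τ * π) m) := by
          rw [pow_succ]; rfl
      _ = ((τ * π) ^ t) (τ m) := by rw [h1]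
      _ = (τ ^ t) (τ m) := ih (maps_to_of_fix hτ hm)
      _ = (τ ^ (t+1)) m := by rw [pow_succ]; rfl

lemma pow_mul_eq_right {A B : Finset (Fin n)} (hd : Disjoint A B)
    {τ π : Equiv.Perm (Fin n)} (hτ : ∀ x ∉ A, τ x = x) (hπ : ∀ x ∉ B, π x = x)
    (t : ℕ) {m : Fin n} (hm : m ∈ B) : ((τ * π) ^ t) m = (π ^ t) m := by
  induction t generalizing m with
  | zero => rfl
  | succ t ih =>
    have hπm : π m ∈ B := maps_to_of_fix hπ hm
    have hπmA : π m ∉ A := fun h => (Finset.disjoint_left.mp hd h) hπm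
    have h1 : (τ * π) m = π m := by
      change τ (π m) = π m
      exact hτ _ hπmA
    calc ((τ * π) ^ (t+1)) m = ((τ * π) ^ t) ((τ * π) m) := by
          rw [pow_succ]; rfl
      _ = ((τ * π) ^ t) (π m) := by rw [h1]
      _ = (π ^ t) (π m) := ih hπm
      _ = (π ^ (t+1)) m := by rw [pow_succ]; rfl

lemma permOrbit_congr {τ π : Equiv.Perm (Fin n)} {m : Fin n}
    (h : ∀ t : ℕ, (τ ^ t) m = (π ^ t) m) : permOrbit τ m = permOrbit π m := by
  unfold permOrbit
  apply Finset.filter_congr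
  intro y _
  constructor <;> rintro ⟨t, ht, rfl⟩
  · exact ⟨t, ht, (h t).symm⟩
  · exact ⟨t, ht, h t⟩

lemma cycleList_congr {τ π : Equiv.Perm (Fin n)} {m : Fin n}
    (h : ∀ t : ℕ, (τ ^ t) m = (π ^ t) m) : cycleList τ m = cycleList π m := by
  unfold cycleList
  rw [permOrbit_congr h]
  exact List.map_congr_left (fun t _ => h t)

lemma cycleFun_mul (g : List (Fin n) → ℂ) {A B : Finset (Fin n)} (hd : Disjoint A B)
    {τ π : Equiv.Perm (Fin n)} (hτ : ∀ x ∉ A, τ x = x) (hπ : ∀ x ∉ B, π x = x) :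
    cycleFun g (A ∪ B) (τ * π) = cycleFun g A τ * cycleFun g B π := by
  unfold cycleFun
  rw [Finset.filter_union, Finset.prod_union (Finset.disjoint_filter_filter hd)]
  congr 1
  · apply Finset.prod_congr
    · apply Finset.filter_congr
      intro m hm
      rw [permOrbit_congr (fun t => pow_mul_eq_left hd hτ hπ t hm)]
    · intro m hm
      rw [Finset.mem_filter] at hm
      rw [cycleList_congr (fun t => pow_mul_eq_left hd hτ hπ t hm.1)]
  · apply Finset.prod_congr
    · apply Finset.filter_congr
      intro m hm
      rw [permOrbit_congr (fun t => pow_mul_eq_right hd hτ hπ t hm)]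
    · intro m hm
      rw [Finset.mem_filter] at hm
      rw [cycleList_congr (fun t => pow_mul_eq_right hd hτ hπ t hm.1)]

/-- Restriction of a permutation to an invariant finset (identity if not invariant). -/
def restrictPerm (π : Equiv.Perm (Fin n)) (A : Finset (Fin n)) : Equiv.Perm (Fin n) :=
  if h : ∀ x, x ∈ A ↔ π x ∈ A then Equiv.Perm.ofSubtype (π.subtypePerm (fun x => (h x).symm)) else 1

lemma invariant_iff {π : Equiv.Perm (Fin n)} {A : Finset (Fin n)}
    (hinv : ∀ x ∈ A, π x ∈ A) : ∀ x, x ∈ A ↔ π x ∈ A := by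
  have himg : A.image π = A := by
    apply Finset.eq_of_subset_of_card_le
    · intro y hy
      obtain ⟨x, hx, rfl⟩ := Finset.mem_image.mp hy
      exact hinv x hx
    · rw [Finset.card_image_of_injective _ π.injective]
  intro x
  constructor
  · exact hinv x
  · intro h
    rw [← himg] at h
    obtain ⟨a, ha, hax⟩ := Finset.mem_image.mp h
    rwa [← π.injective hax]

lemma restrictPerm_apply_of_mem {π : Equiv.Perm (Fin n)} {A : Finset (Fin n)}
    (hinv : ∀ x ∈ A, π x ∈ A) {x : Fin n} (hx : x ∈ A) :
    restrictPerm π A x = π x := by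
  rw [restrictPerm, dif_pos (invariant_iff hinv)]
  exact Equiv.Perm.ofSubtype_apply_of_mem _ hx

lemma restrictPerm_apply_of_not_mem {π : Equiv.Perm (Fin n)} {A : Finset (Fin n)}
    {x : Fin n} (hx : x ∉ A) : restrictPerm π A x = x := by
  rw [restrictPerm]
  split
  · exact Equiv.Perm.ofSubtype_apply_of_not_mem _ hx
  · rfl


lemma keyA (g : List (Fin n) → ℂ) (S : Finset (Finset (Fin n))) :
    (∀ A ∈ S, ∀ B ∈ S, A ≠ B → Disjoint A B) →
    (∏ A ∈ S, ∑ τ ∈ Finset.univ.filter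
        (fun τ : Equiv.Perm (Fin n) => ∀ x, x ∉ A → τ x = x), cycleFun g A τ)
    = ∑ π ∈ Finset.univ.filter (fun π : Equiv.Perm (Fin n) =>
        (∀ x, x ∉ S.sup id → π x = x) ∧ ∀ A ∈ S, ∀ x ∈ A, π x ∈ A),
        cycleFun g (S.sup id) π := by
  induction S using Finset.induction_on with
  | empty =>
    intro _
    rw [Finset.prod_empty]
    have h1 : Finset.univ.filter (fun π : Equiv.Perm (Fin n) =>
        (∀ x, x ∉ (∅ : Finset (Finset (Fin n))).sup id → π x = x) ∧
          ∀ A ∈ (∅ : Finset (Finset (Fin n))), ∀ x ∈ A, π x ∈ A) = {1} := by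
      ext π
      simp only [Finset.mem_filter, Finset.mem_univ, true_and, Finset.mem_singleton]
      constructor
      · rintro ⟨h, -⟩
        apply Equiv.ext
        intro x
        exact h x (by simp)
      · rintro rfl
        exact ⟨fun x _ => rfl, fun A h => absurd h (Finset.notMem_empty A)⟩
    rw [h1, Finset.sum_singleton]
    simp [cycleFun, Finset.bot_eq_empty]
  | @insert A S' hA ih =>
    intro hdisj
    have hdisj' : ∀ A₁ ∈ S', ∀ B ∈ S', A₁ ≠ B → Disjoint A₁ B := fun A₁ h1 B h2 =>
      hdisj A₁ (Finset.mem_insert_of_mem h1) B (Finset.mem_insert_of_mem h2)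
    have hAU : Disjoint A (S'.sup id) := by
      rw [Finset.disjoint_sup_right]
      intro B hB
      exact hdisj A (Finset.mem_insert_self A S') B (Finset.mem_insert_of_mem hB)
        (by rintro rfl; exact hA hB)
    rw [Finset.prod_insert hA, ih hdisj', Finset.sum_mul_sum, ← Finset.sum_product']
    have hsup : (insert A S').sup id = A ∪ S'.sup id := by
      rw [Finset.sup_insert, id_eq, Finset.sup_eq_union]
    rw [hsup]
    set U' := S'.sup id with hU'
    apply Finset.sum_nbij' (i := fun p : Equiv.Perm (Fin n) × Equiv.Perm (Fin n) => p.1 * p.2)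
      (j := fun π => (restrictPerm π A, restrictPerm π U'))
    -- hi : maps into target
    · rintro ⟨τ, π'⟩ hp
      rw [Finset.mem_product, Finset.mem_filter, Finset.mem_filter] at hp
      obtain ⟨⟨-, hτ⟩, -, hπ'fix, hπ'inv⟩ := hp
      rw [Finset.mem_filter]
      refine ⟨Finset.mem_univ _, ?_, ?_⟩
      · intro x hx
        rw [Finset.mem_union] at hx
        push_neg at hx
        change τ (π' x) = x
        rw [hπ'fix x hx.2, hτ x hx.1]
      · intro B hB x hx
        rcases Finset.mem_insert.mp hB with rfl | hB'
        · have hxU : x ∉ U' := Finset.disjoint_left.mp hAU hx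
          change τ (π' x) ∈ B
          rw [hπ'fix x hxU]
          exact maps_to_of_fix hτ hx
        · have h1 : π' x ∈ B := hπ'inv B hB' x hx
          have h2 : π' x ∈ U' := Finset.le_sup (f := id) hB' h1
          have h3 : π' x ∉ A := Finset.disjoint_right.mp hAU h2
          change τ (π' x) ∈ B
          rw [hτ _ h3]
          exact h1
    -- hj : inverse maps into source
    · intro π hπ
      rw [Finset.mem_filter] at hπ
      obtain ⟨-, hfix, hinv⟩ := hπ
      have hinvA : ∀ x ∈ A, π x ∈ A := hinv A (Finset.mem_insert_self A S')
      have hinvU' : ∀ x ∈ U', π x ∈ U' := by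
        intro x hx
        obtain ⟨B, hB, hxB⟩ := Finset.mem_sup.mp hx
        exact Finset.le_sup (f := id) hB (hinv B (Finset.mem_insert_of_mem hB) x hxB)
      rw [Finset.mem_product, Finset.mem_filter, Finset.mem_filter]
      refine ⟨⟨Finset.mem_univ _, fun x hx => restrictPerm_apply_of_not_mem hx⟩,
        Finset.mem_univ _, fun x hx => restrictPerm_apply_of_not_mem hx, ?_⟩
      intro B hB x hx
      have hxU : x ∈ U' := Finset.le_sup (f := id) hB hx
      rw [restrictPerm_apply_of_mem hinvU' hxU]
      exact hinv B (Finset.mem_insert_of_mem hB) x hx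
    -- left_inv
    · rintro ⟨τ, π'⟩ hp
      rw [Finset.mem_product, Finset.mem_filter, Finset.mem_filter] at hp
      obtain ⟨⟨-, hτ⟩, -, hπ'fix, hπ'inv⟩ := hp
      have hinvA : ∀ x ∈ A, (τ * π') x ∈ A := by
        intro x hx
        have hxU : x ∉ U' := Finset.disjoint_left.mp hAU hx
        change τ (π' x) ∈ A
        rw [hπ'fix x hxU]
        exact maps_to_of_fix hτ hx
      have hinvU' : ∀ x ∈ U', (τ * π') x ∈ U' := by
        intro x hx
        obtain ⟨B, hB, hxB⟩ := Finset.mem_sup.mp hx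
        have h1 : π' x ∈ B := hπ'inv B hB x hxB
        have h2 : π' x ∈ U' := Finset.le_sup (f := id) hB h1
        have h3 : π' x ∉ A := Finset.disjoint_right.mp hAU h2
        change τ (π' x) ∈ U'
        rw [hτ _ h3]
        exact h2
      have e1 : restrictPerm (τ * π') A = τ := by
        apply Equiv.ext
        intro x
        by_cases hx : x ∈ A
        · rw [restrictPerm_apply_of_mem hinvA hx]
          have hxU : x ∉ U' := Finset.disjoint_left.mp hAU hx
          change τ (π' x) = τ x
          rw [hπ'fix x hxU]
        · rw [restrictPerm_apply_of_not_mem hx, hτ x hx]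
      have e2 : restrictPerm (τ * π') U' = π' := by
        apply Equiv.ext
        intro x
        by_cases hx : x ∈ U'
        · rw [restrictPerm_apply_of_mem hinvU' hx]
          have h3 : π' x ∉ A := Finset.disjoint_right.mp hAU
            (by
              obtain ⟨B, hB, hxB⟩ := Finset.mem_sup.mp hx
              exact Finset.le_sup (f := id) hB (hπ'inv B hB x hxB))
          change τ (π' x) = π' x
          rw [hτ _ h3]
        · rw [restrictPerm_apply_of_not_mem hx, hπ'fix x hx]
      simp only [e1, e2]
    -- right_inv
    · intro π hπ
      rw [Finset.mem_filter] at hπ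
      obtain ⟨-, hfix, hinv⟩ := hπ
      have hinvA : ∀ x ∈ A, π x ∈ A := hinv A (Finset.mem_insert_self A S')
      have hinvU' : ∀ x ∈ U', π x ∈ U' := by
        intro x hx
        obtain ⟨B, hB, hxB⟩ := Finset.mem_sup.mp hx
        exact Finset.le_sup (f := id) hB (hinv B (Finset.mem_insert_of_mem hB) x hxB)
      apply Equiv.ext
      intro x
      change restrictPerm π A (restrictPerm π U' x) = π x
      by_cases hxA : x ∈ A
      · have hxU : x ∉ U' := Finset.disjoint_left.mp hAU hxA
        rw [restrictPerm_apply_of_not_mem hxU, restrictPerm_apply_of_mem hinvA hxA]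
      · by_cases hxU : x ∈ U'
        · rw [restrictPerm_apply_of_mem hinvU' hxU,
            restrictPerm_apply_of_not_mem (Finset.disjoint_right.mp hAU (hinvU' x hxU))]
        · rw [restrictPerm_apply_of_not_mem hxU, restrictPerm_apply_of_not_mem hxA]
          exact (hfix x (by rw [Finset.mem_union]; push_neg; exact ⟨hxA, hxU⟩)).symm
    -- values
    · rintro ⟨τ, π'⟩ hp
      rw [Finset.mem_product, Finset.mem_filter, Finset.mem_filter] at hp
      obtain ⟨⟨-, hτ⟩, -, hπ'fix, -⟩ := hp
      exact (cycleFun_mul g hAU hτ hπ'fix).symm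

lemma orbit_subset_block (hn : 1 ≤ n) {π : Equiv.Perm (Fin n)}
    {A : Finset (Fin n)} (hA : ∀ x ∈ A, π x ∈ A) {x : Fin n} (hx : x ∈ A) :
    permOrbit π x ⊆ A := by
  intro y hy
  simp only [permOrbit, Finset.mem_filter, Finset.mem_univ, true_and] at hy
  obtain ⟨t, -, rfl⟩ := hy
  induction t with
  | zero => simpa using hx
  | succ t ih =>
    have h1 : (π ^ (t+1)) x = π ((π ^ t) x) := by rw [pow_succ']; rfl
    rw [h1]
    exact hA _ ih

lemma stepC_aux (hn : 1 ≤ n) (π : Equiv.Perm (Fin n)) (μ : ℂ) (m : ℕ)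
    (e : Fin m ≃ {x // x ∈ Finset.univ.image (permOrbit π)}) :
    (∑ σ ∈ Finset.univ.filter (fun σ : Finset (Finset (Fin n)) =>
        IsSetPartition σ ∧ ∀ A ∈ σ, ∀ x ∈ A, π x ∈ A), μ ^ σ.card)
    = touchard m μ := by
  classical
  rw [touchard]
  -- basic facts about the orbit enumeration e
  have horb : ∀ i : Fin m, ∃ x : Fin n, permOrbit π x = (e i).1 := by
    intro i
    obtain ⟨x, -, hx⟩ := Finset.mem_image.mp (e i).2
    exact ⟨x, hx⟩
  have hne : ∀ i : Fin m, ((e i).1 : Finset (Fin n)).Nonempty := by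
    intro i
    obtain ⟨x, hx⟩ := horb i
    exact ⟨x, hx ▸ mem_permOrbit_self hn π x⟩
  have hcoh : ∀ (i : Fin m) (x : Fin n), x ∈ (e i).1 → permOrbit π x = (e i).1 := by
    intro i x hx
    obtain ⟨y, hy⟩ := horb i
    rw [← hy] at hx ⊢
    exact permOrbit_eq_of_mem hn hx
  have einj : ∀ i j : Fin m, (e i).1 = (e j).1 → i = j := fun i j h =>
    e.injective (Subtype.coe_injective h)
  have hsurj : ∀ x : Fin n, ∃ i : Fin m, (e i).1 = permOrbit π x := by
    intro x
    refine ⟨e.symm ⟨permOrbit π x, Finset.mem_image_of_mem _ (Finset.mem_univ x)⟩, ?_⟩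
    rw [Equiv.apply_symm_apply]
  -- the key per-block identity
  have hsupfilter : ∀ (σ : Finset (Finset (Fin n))), (∀ A ∈ σ, ∀ x ∈ A, π x ∈ A) →
      ∀ A ∈ σ, (Finset.univ.filter (fun i : Fin m => (e i).1 ⊆ A)).sup
        (fun i => (e i).1) = A := by
    intro σ hσinv A hA
    apply Finset.Subset.antisymm
    · intro x hx
      obtain ⟨i, hiA, hxi⟩ := Finset.mem_sup.mp hx
      exact (Finset.mem_filter.mp hiA).2 hxi
    · intro x hx
      obtain ⟨i, hi⟩ := hsurj x
      have hsub : (e i).1 ⊆ A := by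
        rw [hi]
        exact orbit_subset_block hn (hσinv A hA) hx
      apply Finset.mem_sup.mpr
      exact ⟨i, Finset.mem_filter.mpr ⟨Finset.mem_univ i, hsub⟩,
        by rw [hi]; exact mem_permOrbit_self hn π x⟩
  apply Finset.sum_nbij'
    (i := fun σ => σ.image (fun A => Finset.univ.filter (fun i : Fin m => (e i).1 ⊆ A)))
    (j := fun η => η.image (fun B => B.sup (fun i => (e i).1)))
  -- hi : image is a set partition of Fin m
  · intro σ hσ
    rw [Finset.mem_filter] at hσ
    obtain ⟨-, ⟨hne0, hdisj, hcover⟩, hinv⟩ := hσ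
    rw [Finset.mem_filter]
    refine ⟨Finset.mem_univ _, ?_, ?_, ?_⟩
    · intro hmem
      obtain ⟨A, hA, hAe⟩ := Finset.mem_image.mp hmem
      have hAne : A.Nonempty := Finset.nonempty_iff_ne_empty.mpr (fun h => hne0 (h ▸ hA))
      obtain ⟨x, hx⟩ := hAne
      obtain ⟨i, hi⟩ := hsurj x
      have : i ∈ Finset.univ.filter (fun i : Fin m => (e i).1 ⊆ A) :=
        Finset.mem_filter.mpr ⟨Finset.mem_univ i,
          by rw [hi]; exact orbit_subset_block hn (hinv A hA) hx⟩
      rw [hAe] at this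
      exact Finset.notMem_empty i this
    · intro B1 hB1 B2 hB2 hB12
      obtain ⟨A1, hA1, rfl⟩ := Finset.mem_image.mp hB1
      obtain ⟨A2, hA2, rfl⟩ := Finset.mem_image.mp hB2
      have hA12 : A1 ≠ A2 := fun h => hB12 (by rw [h])
      have hdA : Disjoint A1 A2 := hdisj A1 hA1 A2 hA2 hA12
      rw [Finset.disjoint_left]
      intro i hi1 hi2
      have hs1 : (e i).1 ⊆ A1 := (Finset.mem_filter.mp hi1).2
      have hs2 : (e i).1 ⊆ A2 := (Finset.mem_filter.mp hi2).2
      obtain ⟨x, hx⟩ := hne i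
      exact Finset.disjoint_left.mp hdA (hs1 hx) (hs2 hx)
    · apply Finset.eq_univ_of_forall
      intro i
      apply Finset.mem_sup.mpr
      obtain ⟨x, hx⟩ := horb i
      have hxuniv : x ∈ σ.sup id := by rw [hcover]; exact Finset.mem_univ x
      obtain ⟨A, hA, hxA⟩ := Finset.mem_sup.mp hxuniv
      refine ⟨Finset.univ.filter (fun i : Fin m => (e i).1 ⊆ A),
        Finset.mem_image_of_mem _ hA, ?_⟩
      show i ∈ Finset.univ.filter (fun i : Fin m => (e i).1 ⊆ A)
      refine Finset.mem_filter.mpr ⟨Finset.mem_univ i, ?_⟩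
      rw [← hx]
      exact orbit_subset_block hn (hinv A hA) hxA
  -- hj : union-of-orbits map lands in invariant partitions
  · intro η hη
    rw [Finset.mem_filter] at hη
    obtain ⟨-, hne0, hdisj, hcover⟩ := hη
    rw [Finset.mem_filter]
    refine ⟨Finset.mem_univ _, ⟨?_, ?_, ?_⟩, ?_⟩
    · intro hmem
      obtain ⟨B, hB, hBe⟩ := Finset.mem_image.mp hmem
      have hBne : B.Nonempty := Finset.nonempty_iff_ne_empty.mpr (fun h => hne0 (h ▸ hB))
      obtain ⟨i, hi⟩ := hBne
      obtain ⟨x, hx⟩ := hne i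
      have : x ∈ B.sup (fun i => (e i).1) := Finset.mem_sup.mpr ⟨i, hi, hx⟩
      rw [hBe] at this
      exact Finset.notMem_empty x this
    · intro A1 hA1 A2 hA2 hA12
      obtain ⟨B1, hB1, rfl⟩ := Finset.mem_image.mp hA1
      obtain ⟨B2, hB2, rfl⟩ := Finset.mem_image.mp hA2
      have hB12 : B1 ≠ B2 := fun h => hA12 (by rw [h])
      have hdB : Disjoint B1 B2 := hdisj B1 hB1 B2 hB2 hB12
      rw [Finset.disjoint_left]
      intro x hx1 hx2
      obtain ⟨i, hiB1, hxi⟩ := Finset.mem_sup.mp hx1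
      obtain ⟨j, hjB2, hxj⟩ := Finset.mem_sup.mp hx2
      have hij : i = j := einj i j (by rw [← hcoh i x hxi, ← hcoh j x hxj])
      exact Finset.disjoint_left.mp hdB hiB1 (hij ▸ hjB2)
    · apply Finset.eq_univ_of_forall
      intro x
      apply Finset.mem_sup.mpr
      obtain ⟨i, hi⟩ := hsurj x
      have hiuniv : i ∈ η.sup id := by rw [hcover]; exact Finset.mem_univ i
      obtain ⟨B, hB, hiB⟩ := Finset.mem_sup.mp hiuniv
      refine ⟨B.sup (fun i => (e i).1), Finset.mem_image_of_mem _ hB, ?_⟩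
      show x ∈ B.sup (fun i => (e i).1)
      exact Finset.mem_sup.mpr ⟨i, hiB, by rw [hi]; exact mem_permOrbit_self hn π x⟩
    · intro A hA x hx
      obtain ⟨B, hB, rfl⟩ := Finset.mem_image.mp hA
      obtain ⟨i, hiB, hxi⟩ := Finset.mem_sup.mp hx
      apply Finset.mem_sup.mpr
      refine ⟨i, hiB, ?_⟩
      rw [← hcoh i x hxi]
      exact apply_mem_permOrbit hn π x
  -- left_inv : Φ (Ψ σ) = σ
  · intro σ hσ
    rw [Finset.mem_filter] at hσ
    obtain ⟨-, -, hinv⟩ := hσ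
    rw [Finset.image_image]
    calc σ.image ((fun B : Finset (Fin m) => B.sup (fun i => (e i).1)) ∘
          (fun A => Finset.univ.filter (fun i : Fin m => (e i).1 ⊆ A)))
        = σ.image id := Finset.image_congr (fun A hA => hsupfilter σ hinv A hA)
      _ = σ := Finset.image_id
  -- right_inv : Ψ (Φ η) = η
  · intro η hη
    rw [Finset.mem_filter] at hη
    obtain ⟨-, -, hdisj, -⟩ := hη
    rw [Finset.image_image]
    have key : ∀ B ∈ η, Finset.univ.filter
        (fun i : Fin m => (e i).1 ⊆ B.sup (fun i => (e i).1)) = B := by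
      intro B hB
      apply Finset.Subset.antisymm
      · intro i hi
        have hsub : (e i).1 ⊆ B.sup (fun i => (e i).1) := (Finset.mem_filter.mp hi).2
        obtain ⟨x, hx⟩ := hne i
        obtain ⟨j, hjB, hxj⟩ := Finset.mem_sup.mp (hsub hx)
        have hij : i = j := einj i j (by rw [← hcoh i x hx, ← hcoh j x hxj])
        exact hij ▸ hjB
      · intro i hi
        exact Finset.mem_filter.mpr ⟨Finset.mem_univ i,
          Finset.le_sup (f := fun i => (e i).1) hi⟩
    calc η.image ((fun A : Finset (Fin n) =>
            Finset.univ.filter (fun i : Fin m => (e i).1 ⊆ A)) ∘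
          (fun B => B.sup (fun i => (e i).1)))
        = η.image id := Finset.image_congr (fun B hB => key B hB)
      _ = η := Finset.image_id
  -- values : cards agree
  · intro σ hσ
    rw [Finset.mem_filter] at hσ
    obtain ⟨-, -, hinv⟩ := hσ
    rw [Finset.card_image_of_injOn]
    intro A1 hA1 A2 hA2 heq
    have h1 := hsupfilter σ hinv A1 (Finset.mem_coe.mp hA1)
    have h2 := hsupfilter σ hinv A2 (Finset.mem_coe.mp hA2)
    rw [← h1, ← h2]
    exact congrArg (fun s : Finset (Fin m) => s.sup fun i => (e i).1) heq

lemma stepC (hn : 1 ≤ n) (π : Equiv.Perm (Fin n)) (μ : ℂ) :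
    (∑ σ ∈ Finset.univ.filter (fun σ : Finset (Finset (Fin n)) =>
        IsSetPartition σ ∧ ∀ A ∈ σ, ∀ x ∈ A, π x ∈ A), μ ^ σ.card)
    = touchard (numOrbits π) μ :=
  stepC_aux hn π μ (numOrbits π)
    ((Finset.equivFin (Finset.univ.image (permOrbit π))).symm)

/-- Generalized partition/permutation identity for a multiplicative function determined by a
cyclically invariant `g` on nonempty lists of distinct elements:
`Σ_σ μ^{|σ|} Π_{A∈σ} (Σ_{τ ∈ Sym(A)} F(τ)) = Σ_{π∈S_n} T_{c(π)}(μ) · F(π)`. -/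
theorem partition_permutation_touchard_multiplicative (n : ℕ) (hn : 1 ≤ n)
    (g : List (Fin n) → ℂ)
    (hg : ∀ l : List (Fin n), l ≠ [] → l.Nodup → g (l.rotate 1) = g l) (μ : ℂ) :
    (∑ σ ∈ Finset.univ.filter (IsSetPartition (n := n)),
        μ ^ σ.card * ∏ A ∈ σ,
          ∑ τ ∈ Finset.univ.filter
              (fun τ : Equiv.Perm (Fin n) => ∀ x, x ∉ A → τ x = x),
            cycleFun g A τ)
      = ∑ π : Equiv.Perm (Fin n), touchard (numOrbits π) μ * cycleFun g Finset.univ π := by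
  classical
  have key1 : ∀ σ ∈ Finset.univ.filter (IsSetPartition (n := n)),
      (μ ^ σ.card * ∏ A ∈ σ, ∑ τ ∈ Finset.univ.filter
          (fun τ : Equiv.Perm (Fin n) => ∀ x, x ∉ A → τ x = x), cycleFun g A τ)
      = ∑ π ∈ Finset.univ, (if (∀ A ∈ σ, ∀ x ∈ A, π x ∈ A) then
          μ ^ σ.card * cycleFun g Finset.univ π else 0) := by
    intro σ hσ
    rw [Finset.mem_filter] at hσ
    obtain ⟨-, -, hdisj, hcover⟩ := hσ
    rw [keyA g σ hdisj, hcover, Finset.mul_sum, Finset.sum_filter]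
    apply Finset.sum_congr rfl
    intro π _
    apply if_congr _ rfl rfl
    exact and_iff_right (fun x hx => absurd (Finset.mem_univ x) hx)
  rw [Finset.sum_congr rfl key1, Finset.sum_comm]
  apply Finset.sum_congr rfl
  intro π _
  rw [← Finset.sum_filter, Finset.filter_filter, ← Finset.sum_mul, stepC hn π μ]

end
end Stmt8
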